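/- arXiv:1307.5367 — 5 statements merged into one kernel-verified Lean document; each statement's English description precedes it below -/
import Mathlib

section
/- As x → 0 (through nonzero values), l(x) admits the Taylor expansion l(x) = 2/3 − x/3 + 7x²/120 − x³/720 − 29x⁴/40320 + x⁵/80640 + 79x⁶/4838400 − x⁷/9676800 − 697x⁸/1703116800 + O(x⁹); that is, the difference between l(x) and this degree-8 polynomial is O(x⁹) as x → 0. -/
open Real Asymptotics Filter Topology

/-- The function `l(x) = (2 + e^x (x − 2) + x) / ((e^{x/2} − 1)³ (e^{x/2} + 1))`. -/
noncomputable def lFun (x : ℝ) : ℝ :=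
  (2 + Real.exp x * (x - 2) + x) / ((Real.exp (x / 2) - 1) ^ 3 * (Real.exp (x / 2) + 1))

/-- Degree-11 Taylor polynomial of `exp (x/2)`. -/
noncomputable def T1 (x : ℝ) : ℝ := (1 : ℝ) + (1/2 : ℝ) * x + (1/8 : ℝ) * x ^ 2 + (1/48 : ℝ) * x ^ 3 + (1/384 : ℝ) * x ^ 4 + (1/3840 : ℝ) * x ^ 5 + (1/46080 : ℝ) * x ^ 6 + (1/645120 : ℝ) * x ^ 7 + (1/10321920 : ℝ) * x ^ 8 + (1/185794560 : ℝ) * x ^ 9 + (1/3715891200 : ℝ) * x ^ 10 + (1/81749606400 : ℝ) * x ^ 11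

/-- Degree-11 Taylor polynomial of `exp x`. -/
noncomputable def T2 (x : ℝ) : ℝ := (1 : ℝ) + (1 : ℝ) * x + (1/2 : ℝ) * x ^ 2 + (1/6 : ℝ) * x ^ 3 + (1/24 : ℝ) * x ^ 4 + (1/120 : ℝ) * x ^ 5 + (1/720 : ℝ) * x ^ 6 + (1/5040 : ℝ) * x ^ 7 + (1/40320 : ℝ) * x ^ 8 + (1/362880 : ℝ) * x ^ 9 + (1/3628800 : ℝ) * x ^ 10 + (1/39916800 : ℝ) * x ^ 11

/-- The quotient polynomial. -/
noncomputable def Hpoly (x : ℝ) : ℝ := (179/40874803200 : ℝ) + (5923/5722472448000 : ℝ) * x + (44183/17167417344000 : ℝ) * x ^ 2 + (294731/206009008128000 : ℝ) * x ^ 3 + (895/1648072065024 : ℝ) * x ^ 4 + (3555793/21974294200320000 : ℝ) * x ^ 5 + (190776119/4746447547269120000 : ℝ) * x ^ 6 + (1145795737/132900531323535360000 : ℝ) * x ^ 7 + (54322847/33225132830883840000 : ℝ) * x ^ 8 + (4657785313/16707495366387302400000 : ℝ) * x ^ 9 + (1012408643/23390493512942223360000 : ℝ) * x ^ 10 + (128470369/20791549789281976320000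 : ℝ) * x ^ 11 + (113774711/139183101895193395200000 : ℝ) * x ^ 12 + (5764708723/57157860511626087628800000 : ℝ) * x ^ 13 + (246956819/21169577967268921344000000 : ℝ) * x ^ 14 + (517607411129/407421229726870752618086400000 : ℝ) * x ^ 15 + (213059901871/1629684918907483010472345600000 : ℝ) * x ^ 16 + (8481040573/665177517921421636927488000000 : ℝ) * x ^ 17 + (6000176051/5079537409581765227446272000000 : ℝ) * x ^ 18 + (4481523496589/43023681859157551476469923840000000 : ℝ) * x ^ 19 + (10547841320053/1204663092056411441341157867520000000 : ℝ) * x ^ 20 + (2538355762847/3613989276169234324023473602560000000 : ℝ) * x ^ 21 + (12445761670343/231295313674830996737502310563840000000 : ℝ) * x ^ 22 + (1822007020901/462590627349661993475004621127680000000 : ℝ) * x ^ 23 + (45878047901881/166532625845878317651001663605964800000000 : ℝ) * x ^ 24 + (2043696299737/111021750563918878434001109070643200000000 : ℝ) * x ^ 25 + (521517848129/444087002255675513736004436282572800000000 : ℝ) * x ^ 26 + (571206994133/7993566040602159247248079853086310400000000 : ℝ) * x ^ 27 + (58851554611/14210784072181616439552141961042329600000000 : ℝ) * x ^ 28 + (267475318301/1172389685954983356263051711785992192000000000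 : ℝ) * x ^ 29 + (17962067191/1507358167656407172338209343724847104000000000 : ℝ) * x ^ 30 + (14774231/25122636127606786205636822395414118400000000 : ℝ) * x ^ 31 + (682792883/25010979967039644933611769851434500096000000000 : ℝ) * x ^ 32 + (160040281/135059291822014082641503557197746300518400000000 : ℝ) * x ^ 33 + (322173283/6752964591100704132075177859887315025920000000000 : ℝ) * x ^ 34 + (634597/360158111525370887044009485860656801382400000000 : ℝ) * x ^ 35 + (2307817/39289975802767733132073762093889832878080000000000 : ℝ) * x ^ 36 + (372397/216094866915222532226405691516394080829440000000000 : ℝ) * x ^ 37 + (1363/32014054357810745515023065409836160122880000000000 : ℝ) * x ^ 38 + (233/288126489220296709635207588688525441105920000000000 : ℝ) * x ^ 39 + (697/76065393154158331343694803413770716451962880000000000 : ℝ) * x ^ 40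

/-- The degree-8 Taylor polynomial of `lFun`. -/
noncomputable def Ppoly (x : ℝ) : ℝ :=
  2 / 3 - x / 3 + 7 * x ^ 2 / 120 - x ^ 3 / 720 - 29 * x ^ 4 / 40320 + x ^ 5 / 80640 +
    79 * x ^ 6 / 4838400 - x ^ 7 / 9676800 - 697 * x ^ 8 / 1703116800

/-- Auxiliary continuous factor. -/
noncomputable def Rfun (x : ℝ) : ℝ :=
  (Real.exp (x / 2) - 1) ^ 3 + (Real.exp (x / 2) - 1) ^ 2 * (T1 x - 1) +
    (Real.exp (x / 2) - 1) * (T1 x - 1) ^ 2 + (T1 x - 1) ^ 3 +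
    2 * (Real.exp (x / 2) - 1) ^ 2 + 2 * (Real.exp (x / 2) - 1) * (T1 x - 1) +
    2 * (T1 x - 1) ^ 2

lemma T2_eq (x : ℝ) : (∑ m ∈ Finset.range 12, x ^ m / m.factorial) = T2 x := by
  simp [Finset.sum_range_succ, Nat.factorial, T2]
  ring

lemma T1_eq (x : ℝ) : (∑ m ∈ Finset.range 12, (x / 2) ^ m / m.factorial) = T1 x := by
  simp [Finset.sum_range_succ, Nat.factorial, T1]
  ring

lemma abs_le_one_ev : ∀ᶠ x : ℝ in 𝓝 0, |x| ≤ 1 := by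
  have : Metric.ball (0 : ℝ) 1 ∈ 𝓝 (0 : ℝ) := Metric.ball_mem_nhds 0 one_pos
  filter_upwards [this] with x hx
  rw [Metric.mem_ball, Real.dist_eq, sub_zero] at hx
  exact hx.le

lemma e2_bigO : (fun x : ℝ => Real.exp x - T2 x) =O[𝓝 (0 : ℝ)] fun x => x ^ 12 := by
  rw [Asymptotics.isBigO_iff]
  refine ⟨2, ?_⟩
  filter_upwards [abs_le_one_ev] with x hx
  rw [← T2_eq]
  have h := Real.exp_bound hx (n := 12) (by norm_num)
  rw [Real.norm_eq_abs, Real.norm_eq_abs, abs_pow]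
  calc |Real.exp x - ∑ m ∈ Finset.range 12, x ^ m / m.factorial|
      ≤ |x| ^ 12 * ((12 : ℕ).succ / ((12 : ℕ).factorial * 12)) := h
    _ ≤ |x| ^ 12 * 2 := by
        gcongr
        norm_num [Nat.factorial]
    _ = 2 * |x| ^ 12 := by ring

lemma e1_bigO : (fun x : ℝ => Real.exp (x / 2) - T1 x) =O[𝓝 (0 : ℝ)] fun x => x ^ 12 := by
  rw [Asymptotics.isBigO_iff]
  refine ⟨2, ?_⟩
  filter_upwards [abs_le_one_ev] with x hx
  have hx2 : |x / 2| ≤ 1 := by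
    rw [abs_div, abs_two]
    linarith
  rw [← T1_eq]
  have h := Real.exp_bound hx2 (n := 12) (by norm_num)
  rw [Real.norm_eq_abs, Real.norm_eq_abs, abs_pow]
  have hle : |x / 2| ≤ |x| := by
    rw [abs_div, abs_two]
    linarith [abs_nonneg x]
  calc |Real.exp (x / 2) - ∑ m ∈ Finset.range 12, (x / 2) ^ m / m.factorial|
      ≤ |x / 2| ^ 12 * ((12 : ℕ).succ / ((12 : ℕ).factorial * 12)) := h
    _ ≤ |x| ^ 12 * 2 := by
        apply mul_le_mul
        · exact pow_le_pow_left₀ (abs_nonneg _) hle 12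
        · norm_num [Nat.factorial]
        · positivity
        · positivity
    _ = 2 * |x| ^ 12 := by ring

set_option maxHeartbeats 2000000 in
/-- The key polynomial identity. -/
lemma keyid (x : ℝ) :
    (2 + T2 x * (x - 2) + x) - Ppoly x * ((T1 x - 1) ^ 3 * (T1 x + 1)) = x ^ 12 * Hpoly x := by
  unfold Ppoly Hpoly T1 T2
  ring

/-- The key algebraic decomposition. -/
lemma decomp (x : ℝ) :
    (2 + Real.exp x * (x - 2) + x) -
        Ppoly x * ((Real.exp (x / 2) - 1) ^ 3 * (Real.exp (x / 2) + 1)) =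
      x ^ 12 * Hpoly x + (Real.exp x - T2 x) * (x - 2) -
        Ppoly x * ((Real.exp (x / 2) - T1 x) * Rfun x) := by
  have h := keyid x
  unfold Rfun
  linear_combination h

lemma num_bigO :
    (fun x : ℝ => (2 + Real.exp x * (x - 2) + x) -
        Ppoly x * ((Real.exp (x / 2) - 1) ^ 3 * (Real.exp (x / 2) + 1)))
      =O[𝓝 (0 : ℝ)] fun x => x ^ 12 := by
  have hT1 : Continuous T1 := by unfold T1; fun_prop
  have hH : Continuous Hpoly := by unfold Hpoly; fun_prop
  have hP : Continuous Ppoly := by unfold Ppoly; fun_prop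
  have hR : Continuous Rfun := by
    unfold Rfun
    have : Continuous fun x : ℝ => Real.exp (x / 2) := by fun_prop
    fun_prop
  have hA : (fun x : ℝ => x ^ 12 * Hpoly x) =O[𝓝 (0 : ℝ)] fun x => x ^ 12 := by
    have := (isBigO_refl (fun x : ℝ => x ^ 12) (𝓝 (0 : ℝ))).mul
      ((hH.tendsto 0).isBigO_one ℝ)
    simpa using this
  have hB : (fun x : ℝ => (Real.exp x - T2 x) * (x - 2)) =O[𝓝 (0 : ℝ)] fun x => x ^ 12 := by
    have hc : Continuous fun x : ℝ => x - 2 := by fun_prop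
    have := e2_bigO.mul ((hc.tendsto 0).isBigO_one ℝ)
    simpa using this
  have hC : (fun x : ℝ => Ppoly x * ((Real.exp (x / 2) - T1 x) * Rfun x))
      =O[𝓝 (0 : ℝ)] fun x => x ^ 12 := by
    have := ((hP.tendsto 0).isBigO_one ℝ).mul (e1_bigO.mul ((hR.tendsto 0).isBigO_one ℝ))
    simpa using this
  have := (hA.add hB).sub hC
  refine this.congr' ?_ EventuallyEq.rfl
  filter_upwards with x
  exact (decomp x).symm

lemma exp_half_ne_one {x : ℝ} (hx : x ≠ 0) : Real.exp (x / 2) ≠ 1 := by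
  rw [ne_eq, Real.exp_eq_one_iff]
  exact div_ne_zero hx two_ne_zero

lemma Dfun_ne {x : ℝ} (hx : x ≠ 0) :
    (Real.exp (x / 2) - 1) ^ 3 * (Real.exp (x / 2) + 1) ≠ 0 := by
  apply mul_ne_zero
  · exact pow_ne_zero _ (sub_ne_zero.2 (exp_half_ne_one hx))
  · positivity

lemma tendsto_exp_sub_one_div : Tendsto (fun t : ℝ => (Real.exp t - 1) / t) (𝓝[≠] 0) (𝓝 1) := by
  have h := Real.hasDerivAt_exp 0
  rw [hasDerivAt_iff_tendsto_slope] at h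
  simpa [slope_fun_def, Real.exp_zero, div_eq_inv_mul] using h

lemma tendsto_div_exp_sub_one : Tendsto (fun t : ℝ => t / (Real.exp t - 1)) (𝓝[≠] 0) (𝓝 1) := by
  have := tendsto_exp_sub_one_div.inv₀ one_ne_zero
  simpa [inv_div] using this

lemma tendsto_half : Tendsto (fun x : ℝ => x / 2) (𝓝[≠] (0 : ℝ)) (𝓝[≠] (0 : ℝ)) := by
  apply tendsto_nhdsWithin_of_tendsto_nhds_of_eventually_within
  · have : Tendsto (fun x : ℝ => x / 2) (𝓝 (0 : ℝ)) (𝓝 ((0 : ℝ) / 2)) :=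
      (continuous_id.div_const 2).tendsto 0
    simpa using this.mono_left nhdsWithin_le_nhds
  · filter_upwards [self_mem_nhdsWithin] with x hx
    exact div_ne_zero hx two_ne_zero

lemma tendsto_cube_div_D :
    Tendsto (fun x : ℝ => x ^ 3 / ((Real.exp (x / 2) - 1) ^ 3 * (Real.exp (x / 2) + 1)))
      (𝓝[≠] (0 : ℝ)) (𝓝 4) := by
  have h1 : Tendsto (fun x : ℝ => x / 2 / (Real.exp (x / 2) - 1)) (𝓝[≠] (0 : ℝ)) (𝓝 1) :=
    tendsto_div_exp_sub_one.comp tendsto_half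
  have h2 : Tendsto (fun x : ℝ => 8 / (Real.exp (x / 2) + 1)) (𝓝[≠] (0 : ℝ)) (𝓝 4) := by
    have hc : Continuous fun x : ℝ => 8 / (Real.exp (x / 2) + 1) := by
      apply Continuous.div continuous_const
      · fun_prop
      · intro x
        positivity
    have hval : (8 : ℝ) / (Real.exp ((0 : ℝ) / 2) + 1) = 4 := by
      norm_num [Real.exp_zero]
    have := (hc.tendsto 0).mono_left (nhdsWithin_le_nhds : 𝓝[≠] (0 : ℝ) ≤ 𝓝 0)
    rwa [hval] at this
  have h3 := (h1.pow 3).mul h2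
  have h4 : ((1 : ℝ)) ^ 3 * 4 = 4 := by norm_num
  rw [h4] at h3
  refine h3.congr' ?_
  filter_upwards [self_mem_nhdsWithin] with x hx
  have h4 : Real.exp (x / 2) - 1 ≠ 0 := sub_ne_zero.2 (exp_half_ne_one hx)
  have h5 : Real.exp (x / 2) + 1 ≠ 0 := by positivity
  field_simp
  ring

/-- The Taylor expansion of `l` up to order 8 at `x = 0`, through nonzero values. -/
theorem lFun_taylor :
    (fun x : ℝ => lFun x -
      (2 / 3 - x / 3 + 7 * x ^ 2 / 120 - x ^ 3 / 720 - 29 * x ^ 4 / 40320 + x ^ 5 / 80640 +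
        79 * x ^ 6 / 4838400 - x ^ 7 / 9676800 - 697 * x ^ 8 / 1703116800))
      =O[𝓝[≠] (0 : ℝ)] (fun x : ℝ => x ^ 9) := by
  have hnum := num_bigO.mono (nhdsWithin_le_nhds : 𝓝[≠] (0 : ℝ) ≤ 𝓝 0)
  have hb := tendsto_cube_div_D.isBigO_one ℝ
  have h := (hnum.mul hb).mul (isBigO_refl (fun x : ℝ => (x ^ 3)⁻¹) (𝓝[≠] (0 : ℝ)))
  refine h.congr' ?_ ?_
  · filter_upwards [self_mem_nhdsWithin] with x hx
    have hD := Dfun_ne hx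
    have hx3 : x ^ 3 ≠ 0 := pow_ne_zero _ hx
    have hPd : Ppoly x = 2 / 3 - x / 3 + 7 * x ^ 2 / 120 - x ^ 3 / 720 - 29 * x ^ 4 / 40320 +
        x ^ 5 / 80640 + 79 * x ^ 6 / 4838400 - x ^ 7 / 9676800 - 697 * x ^ 8 / 1703116800 := rfl
    rw [← hPd]
    unfold lFun
    have h4 : Real.exp (x / 2) - 1 ≠ 0 := sub_ne_zero.2 (exp_half_ne_one hx)
    have h5 : Real.exp (x / 2) + 1 ≠ 0 := by positivity
    have hx0 : x ≠ 0 := hx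
    field_simp
  · filter_upwards [self_mem_nhdsWithin] with x hx
    have : (x : ℝ) ^ 3 ≠ 0 := pow_ne_zero _ hx
    field_simp
end

section
/- For all real numbers a, b > 0 with a ≠ b, one has 2 a² ∫₀^∞ r³ (1 + r²a²)^{−2} (1 + r²b²)^{−1} dr = a^{−2} · ℒ₁(b²/a²). -/
open MeasureTheory
open Set Filter Topology

lemma aux_deriv (A B c x : ℝ) (hA : 0 < A) (hB : 0 < B) (hc : c = B - A) (hc0 : c ≠ 0) :
    HasDerivAt (fun x : ℝ => (1/(2*c^2)) * (Real.log (1+A*x^2) - Real.log (1+B*x^2))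
        - 1/(2*c*A) * (1+A*x^2)⁻¹)
      (x^3 * ((1+x^2*A)^2)⁻¹ * (1+x^2*B)⁻¹) x := by
  have hPA : (0:ℝ) < 1 + A*x^2 := by positivity
  have hPB : (0:ℝ) < 1 + B*x^2 := by positivity
  have h1 : HasDerivAt (fun x : ℝ => 1 + A*x^2) (A*(2*x^1)) x :=
    ((hasDerivAt_pow 2 x).const_mul A).const_add 1
  have h2 : HasDerivAt (fun x : ℝ => 1 + B*x^2) (B*(2*x^1)) x :=
    ((hasDerivAt_pow 2 x).const_mul B).const_add 1
  have hlog1 := h1.log hPA.ne'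
  have hlog2 := h2.log hPB.ne'
  have hinv := h1.inv hPA.ne'
  have H := ((hlog1.sub hlog2).const_mul (1/(2*c^2))).sub (hinv.const_mul (1/(2*c*A)))
  refine H.congr_deriv ?_
  subst hc
  have h3 : (1 + A*x^2)^2 ≠ 0 := by positivity
  field_simp
  ring

theorem aux_int (A B : ℝ) (hA : 0 < A) (hB : 0 < B) (hAB : A ≠ B) :
    ∫ r in Set.Ioi (0:ℝ), r^3 * ((1+r^2*A)^2)⁻¹ * (1+r^2*B)⁻¹
      = (1/(2*(B-A)^2)) * (Real.log A - Real.log B) + 1/(2*(B-A)*A) := by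
  set c := B - A with hc
  have hc0 : c ≠ 0 := sub_ne_zero.mpr (Ne.symm hAB)
  set F : ℝ → ℝ := fun x => (1/(2*c^2)) * (Real.log (1+A*x^2) - Real.log (1+B*x^2))
        - 1/(2*c*A) * (1+A*x^2)⁻¹ with hF
  have hderiv : ∀ x ∈ Ici (0:ℝ), HasDerivAt F (x^3 * ((1+x^2*A)^2)⁻¹ * (1+x^2*B)⁻¹) x :=
    fun x _ => aux_deriv A B c x hA hB hc hc0
  have hpos : ∀ x ∈ Ioi (0:ℝ), 0 ≤ x^3 * ((1+x^2*A)^2)⁻¹ * (1+x^2*B)⁻¹ := by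
    intro x hx
    have : (0:ℝ) < x := hx
    positivity
  have hlim : Tendsto F atTop (𝓝 ((1/(2*c^2)) * Real.log (A/B))) := by
    have h1 : Tendsto (fun x : ℝ => (1+A*x^2)/(1+B*x^2)) atTop (𝓝 (A/B)) := by
      have he : (fun x : ℝ => ((x^2)⁻¹+A)/((x^2)⁻¹+B)) =ᶠ[atTop]
          (fun x : ℝ => (1+A*x^2)/(1+B*x^2)) := by
        filter_upwards [eventually_gt_atTop (0:ℝ)] with x hx
        have hx2 : (x:ℝ)^2 ≠ 0 := by positivity
        field_simp
      have hinv : Tendsto (fun x : ℝ => (x^2)⁻¹) atTop (𝓝 0) :=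
        tendsto_inv_atTop_zero.comp (tendsto_pow_atTop two_ne_zero)
      have := (Tendsto.div ((hinv.add tendsto_const_nhds)) ((hinv.add tendsto_const_nhds))
        (by simpa using hB.ne') : Tendsto (fun x : ℝ => ((x^2)⁻¹+A)/((x^2)⁻¹+B)) atTop
          (𝓝 ((0+A)/(0+B))))
      simp only [zero_add] at this
      exact Tendsto.congr' he this
    have hlog : Tendsto (fun x : ℝ => Real.log (1+A*x^2) - Real.log (1+B*x^2)) atTop
        (𝓝 (Real.log (A/B))) := by
      have hcont := (Real.continuousAt_log (by positivity : (A/B : ℝ) ≠ 0)).tendsto.comp h1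
      refine hcont.congr' ?_
      filter_upwards [eventually_gt_atTop (0:ℝ)] with x hx
      have hPA : (0:ℝ) < 1 + A*x^2 := by positivity
      have hPB : (0:ℝ) < 1 + B*x^2 := by positivity
      simp [Function.comp, Real.log_div hPA.ne' hPB.ne']
    have hinv0 : Tendsto (fun x : ℝ => (1+A*x^2)⁻¹) atTop (𝓝 0) := by
      apply tendsto_inv_atTop_zero.comp
      apply tendsto_atTop_add_const_left
      exact (tendsto_pow_atTop two_ne_zero).const_mul_atTop hA
    have H := (hlog.const_mul (1/(2*c^2))).sub (hinv0.const_mul (1/(2*c*A)))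
    rw [show (1/(2*c^2)) * Real.log (A/B) = 1/(2*c^2)*Real.log (A/B) - 1/(2*c*A)*0 by ring]
    exact H
  have := integral_Ioi_of_hasDerivAt_of_nonneg' hderiv hpos hlim
  rw [this]
  have hF0 : F 0 = - (1/(2*c*A)) := by simp [hF]
  rw [hF0, Real.log_div hA.ne' hB.ne']
  ring


/-- The modified logarithm function `ℒ_m` of Connes–Tretkoff:
`ℒ_m(u) = (−1)^m (u−1)^{−(m+1)} (log u − Σ_{i=1}^{m} (−1)^{i+1} (u−1)^i / i)`. -/
noncomputable def modLog (m : ℕ) (u : ℝ) : ℝ :=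
  (-1 : ℝ) ^ m * (u - 1) ^ (-(m + 1 : ℤ)) *
    (Real.log u - ∑ i ∈ Finset.Icc 1 m, (-1 : ℝ) ^ (i + 1) * (u - 1) ^ i / (i : ℝ))

/-- Spectral form of the Connes–Tretkoff rearrangement identity for `𝒟_1 = ℒ_1(Δ)`. -/
theorem integral_modLog_one (a b : ℝ) (ha : 0 < a) (hb : 0 < b) (hab : a ≠ b) :
    2 * a ^ 2 * ∫ r in Set.Ioi (0 : ℝ),
      r ^ 3 * (1 + r ^ 2 * a ^ 2) ^ (-(1 + 1) : ℤ) * (1 + r ^ 2 * b ^ 2)⁻¹ =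
    (a ^ 2)⁻¹ * modLog 1 (b ^ 2 / a ^ 2) := by
  have hA : (0:ℝ) < a^2 := by positivity
  have hB : (0:ℝ) < b^2 := by positivity
  have hAB : a^2 ≠ b^2 := fun h => hab (by nlinarith)
  have hz : ∀ r : ℝ, r ^ 3 * (1 + r ^ 2 * a ^ 2) ^ (-(1 + 1) : ℤ) * (1 + r ^ 2 * b ^ 2)⁻¹
      = r^3 * ((1+r^2*a^2)^2)⁻¹ * (1+r^2*b^2)⁻¹ := by
    intro r
    rw [show (-(1 + 1) : ℤ) = -(2:ℕ) by norm_num, zpow_neg, zpow_natCast]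
  simp only [hz]
  rw [aux_int (a^2) (b^2) hA hB hAB]
  simp only [modLog, Finset.Icc_self, Finset.sum_singleton, pow_one,
    show (-(1 + 1 : ℤ)) = -(2:ℕ) by norm_num, zpow_neg, zpow_natCast]
  norm_num
  have hc0 : b^2 - a^2 ≠ 0 := sub_ne_zero.mpr (Ne.symm hAB)
  have hlog : Real.log (b^2/a^2) = Real.log (b^2) - Real.log (a^2) :=
    Real.log_div hB.ne' hA.ne'
  rw [hlog]
  have hu : b^2/a^2 - 1 = (b^2 - a^2)/a^2 := by field_simp
  rw [hu]
  simp only [Real.log_pow, Nat.cast_ofNat]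
  generalize Real.log a = La
  generalize Real.log b = Lb
  field_simp
  ring
end

section
/- For all real numbers a, b > 0 with a ≠ b, one has 2 a⁴ ∫₀^∞ r⁵ (1 + r²a²)^{−3} (1 + r²b²)^{−1} dr = a^{−2} · ℒ₂(b²/a²). -/
open MeasureTheory

set_option maxHeartbeats 2000000 in
/-- Spectral form of the Connes–Tretkoff rearrangement identity for `𝒟_2 = ℒ_2(Δ)`. -/
theorem integral_modLog_two (a b : ℝ) (ha : 0 < a) (hb : 0 < b) (hab : a ≠ b) :
    2 * a ^ 4 * ∫ r in Set.Ioi (0 : ℝ),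
      r ^ 5 * (1 + r ^ 2 * a ^ 2) ^ (-(2 + 1) : ℤ) * (1 + r ^ 2 * b ^ 2)⁻¹ =
    (a ^ 2)⁻¹ * modLog 2 (b ^ 2 / a ^ 2) := by
  set A := a ^ 2 with hAdef
  set B := b ^ 2 with hBdef
  have hA : (0 : ℝ) < A := pow_pos ha 2
  have hB : (0 : ℝ) < B := pow_pos hb 2
  have hABne : A ≠ B := by
    intro h
    have h2 : (a - b) * (a + b) = 0 := by
      have : a ^ 2 = b ^ 2 := h
      linear_combination this
    rcases mul_eq_zero.mp h2 with h3 | h3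
    · exact hab (by linarith)
    · linarith
  have hABsub : A - B ≠ 0 := sub_ne_zero.mpr hABne
  have hBAsub : B - A ≠ 0 := sub_ne_zero.mpr (Ne.symm hABne)
  set c1 : ℝ := 1 / (2 * (A - B) ^ 3) with hc1
  set c2 : ℝ := -(B - 2 * A) / (2 * A ^ 2 * (A - B) ^ 2) with hc2
  set c3 : ℝ := -1 / (4 * A ^ 2 * (A - B)) with hc3
  set G : ℝ → ℝ := fun r =>
    c1 * (Real.log (1 + r ^ 2 * A) - Real.log (1 + r ^ 2 * B)) +
      (c2 * (1 + r ^ 2 * A)⁻¹ + c3 * ((1 + r ^ 2 * A) ^ 2)⁻¹) with hG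
  have hposA : ∀ r : ℝ, (0 : ℝ) < 1 + r ^ 2 * A := fun r =>
    add_pos_of_pos_of_nonneg one_pos (mul_nonneg (sq_nonneg r) hA.le)
  have hposB : ∀ r : ℝ, (0 : ℝ) < 1 + r ^ 2 * B := fun r =>
    add_pos_of_pos_of_nonneg one_pos (mul_nonneg (sq_nonneg r) hB.le)
  -- derivative
  have hderivAll : ∀ x : ℝ, HasDerivAt G
      (x ^ 5 * (1 + x ^ 2 * A) ^ (-(2 + 1) : ℤ) * (1 + x ^ 2 * B)⁻¹) x := by
    intro x
    have h1 : HasDerivAt (fun r : ℝ => 1 + r ^ 2 * A) (2 * x * A) x := by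
      have := ((hasDerivAt_pow 2 x).mul_const A).const_add 1
      simpa [mul_comm, mul_assoc] using this
    have h2 : HasDerivAt (fun r : ℝ => 1 + r ^ 2 * B) (2 * x * B) x := by
      have := ((hasDerivAt_pow 2 x).mul_const B).const_add 1
      simpa [mul_comm, mul_assoc] using this
    have hlog1 := h1.log (hposA x).ne'
    have hlog2 := h2.log (hposB x).ne'
    have hinv := h1.inv (hposA x).ne'
    have hinv2 := (h1.pow 2).inv (pow_ne_zero 2 (hposA x).ne')
    have hG' := ((hlog1.sub hlog2).const_mul c1).add
      ((hinv.const_mul c2).add (hinv2.const_mul c3))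
    refine hG'.congr_deriv ?_
    have e1 : (1 + x ^ 2 * A) ^ (-(2 + 1) : ℤ) = ((1 + x ^ 2 * A) ^ 3)⁻¹ := by
      rw [zpow_neg]
      rw [show (2 + 1 : ℤ) = ((3:ℕ):ℤ) by norm_num, zpow_natCast]
    rw [e1, hc1, hc2, hc3]
    have hxA := (hposA x).ne'
    have hxB := (hposB x).ne'
    simp only [Pi.pow_apply]
    field_simp
    ring
  -- nonnegativity
  have hnonneg : ∀ x ∈ Set.Ioi (0 : ℝ),
      0 ≤ x ^ 5 * (1 + x ^ 2 * A) ^ (-(2 + 1) : ℤ) * (1 + x ^ 2 * B)⁻¹ := by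
    intro x hx
    have hx0 : (0 : ℝ) < x := hx
    have h1 := hposA x
    have h2 := hposB x
    positivity
  -- limit at infinity
  have hlim : Filter.Tendsto G Filter.atTop
      (nhds (c1 * (Real.log A - Real.log B) + (c2 * 0 + c3 * 0))) := by
    have hlog : Filter.Tendsto (fun r : ℝ => Real.log (1 + r ^ 2 * A) - Real.log (1 + r ^ 2 * B))
        Filter.atTop (nhds (Real.log A - Real.log B)) := by
      have key : ∀ᶠ r : ℝ in Filter.atTop,
          Real.log ((r ^ 2)⁻¹ + A) - Real.log ((r ^ 2)⁻¹ + B)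
            = Real.log (1 + r ^ 2 * A) - Real.log (1 + r ^ 2 * B) := by
        filter_upwards [Filter.eventually_gt_atTop (0 : ℝ)] with r hr
        have hr2 : (0 : ℝ) < r ^ 2 := by positivity
        have e : ∀ C : ℝ, 0 < C → Real.log (1 + r ^ 2 * C)
            = Real.log (r ^ 2) + Real.log ((r ^ 2)⁻¹ + C) := by
          intro C hC
          have h : (1 : ℝ) + r ^ 2 * C = r ^ 2 * ((r ^ 2)⁻¹ + C) := by
            field_simp
          rw [h, Real.log_mul hr2.ne' (by positivity)]
        rw [e A hA, e B hB]; ring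
      refine Filter.Tendsto.congr' key ?_
      have hinv : Filter.Tendsto (fun r : ℝ => (r ^ 2)⁻¹) Filter.atTop (nhds 0) :=
        (Filter.tendsto_pow_atTop (by norm_num : (2:ℕ) ≠ 0)).inv_tendsto_atTop
      have t1 : Filter.Tendsto (fun r : ℝ => (r ^ 2)⁻¹ + A) Filter.atTop (nhds A) := by
        simpa using hinv.add_const A
      have t2 : Filter.Tendsto (fun r : ℝ => (r ^ 2)⁻¹ + B) Filter.atTop (nhds B) := by
        simpa using hinv.add_const B
      exact ((Real.continuousAt_log hA.ne').tendsto.comp t1).sub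
        ((Real.continuousAt_log hB.ne').tendsto.comp t2)
    have hatTop : Filter.Tendsto (fun r : ℝ => 1 + r ^ 2 * A) Filter.atTop Filter.atTop := by
      apply Filter.tendsto_atTop_add_const_left
      exact Filter.Tendsto.atTop_mul_const hA (Filter.tendsto_pow_atTop (by norm_num : (2:ℕ) ≠ 0))
    have hinvA : Filter.Tendsto (fun r : ℝ => (1 + r ^ 2 * A)⁻¹) Filter.atTop (nhds 0) :=
      hatTop.inv_tendsto_atTop
    have hinvA2 : Filter.Tendsto (fun r : ℝ => ((1 + r ^ 2 * A) ^ 2)⁻¹) Filter.atTop (nhds 0) := by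
      have := hinvA.pow 2
      simpa [inv_pow] using this
    exact (hlog.const_mul c1).add ((hinvA.const_mul c2).add (hinvA2.const_mul c3))
  -- evaluate the integral
  have hint : (∫ r in Set.Ioi (0 : ℝ),
      r ^ 5 * (1 + r ^ 2 * A) ^ (-(2 + 1) : ℤ) * (1 + r ^ 2 * B)⁻¹)
      = (c1 * (Real.log A - Real.log B) + (c2 * 0 + c3 * 0)) - G 0 := by
    exact integral_Ioi_of_hasDerivAt_of_nonneg
      (hderivAll 0).continuousAt.continuousWithinAt
      (fun x _ => hderivAll x) hnonneg hlim
  rw [hint]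
  have hG0 : G 0 = c2 + c3 := by
    simp [hG, Real.log_one]
  rw [hG0, hc1, hc2, hc3]
  -- unfold modLog 2
  have hmod : modLog 2 (B / A) = (((B - A) / A) ^ 3)⁻¹ *
      (Real.log B - Real.log A - ((B / A - 1) - (B / A - 1) ^ 2 / 2)) := by
    rw [modLog]
    have hsum : (∑ i ∈ Finset.Icc (1:ℕ) 2, (-1:ℝ) ^ (i+1) * (B/A - 1) ^ i / (i:ℝ))
        = (B/A - 1) - (B/A - 1) ^ 2 / 2 := by
      rw [show Finset.Icc 1 2 = {1, 2} from rfl]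
      rw [Finset.sum_insert (by decide), Finset.sum_singleton]
      norm_num
      ring
    rw [hsum, Real.log_div hB.ne' hA.ne']
    have hzp : ((B / A - 1) : ℝ) ^ (-((2:ℕ) + 1 : ℤ)) = (((B - A) / A) ^ 3)⁻¹ := by
      rw [show B / A - 1 = (B - A) / A by field_simp, zpow_neg]
      rw [show ((2:ℕ) + 1 : ℤ) = ((3:ℕ):ℤ) by norm_num, zpow_natCast]
    rw [hzp]
    norm_num
  rw [hmod]
  have hu : B / A - 1 = (B - A) / A := by field_simp
  rw [hu]
  field_simp
  ring
end

section
/- For all real numbers a, b > 0 with a ≠ b, one has 2 a⁶ ∫₀^∞ r⁷ (1 + r²a²)^{−4} (1 + r²b²)^{−1} dr = a^{−2} · ℒ₃(b²/a²). -/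
open MeasureTheory

set_option maxHeartbeats 1600000 in
/-- Spectral form of the Connes–Tretkoff rearrangement identity for `𝒟_3 = ℒ_3(Δ)`. -/
theorem integral_modLog_three (a b : ℝ) (ha : 0 < a) (hb : 0 < b) (hab : a ≠ b) :
    2 * a ^ 6 * ∫ r in Set.Ioi (0 : ℝ),
      r ^ 7 * (1 + r ^ 2 * a ^ 2) ^ (-(3 + 1) : ℤ) * (1 + r ^ 2 * b ^ 2)⁻¹ =
    (a ^ 2)⁻¹ * modLog 3 (b ^ 2 / a ^ 2) := by
  have ha0 : a ≠ 0 := ha.ne'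
  have hb0 : b ≠ 0 := hb.ne'
  have hc : a ^ 2 - b ^ 2 ≠ 0 := by
    intro h
    rcases mul_eq_zero.mp (show (a - b) * (a + b) = 0 by nlinarith) with h1 | h1
    · exact hab (by linarith)
    · nlinarith
  set c : ℝ := a ^ 2 - b ^ 2 with hcdef
  set k1 : ℝ := 1 / (2 * c ^ 4) with hk1
  set k2 : ℝ := -(1 / (a ^ 4 * b ^ 2) - a ^ 2 / (b ^ 2 * c ^ 3)) / (2 * a ^ 2) with hk2
  set k3 : ℝ := -(-(a ^ 2 + 2 * b ^ 2) / (a ^ 4 * b ^ 4) + a ^ 2 / (b ^ 4 * c ^ 2)) / (4 * a ^ 2)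
    with hk3
  set k4 : ℝ := -((a ^ 4 + a ^ 2 * b ^ 2 + b ^ 4) / (a ^ 4 * b ^ 6) - a ^ 2 / (b ^ 6 * c)) /
    (6 * a ^ 2) with hk4
  set F : ℝ → ℝ := fun r =>
    k1 * (Real.log (1 + r ^ 2 * a ^ 2) - Real.log (1 + r ^ 2 * b ^ 2)) +
      (k2 * (1 + r ^ 2 * a ^ 2)⁻¹ +
        (k3 * ((1 + r ^ 2 * a ^ 2)⁻¹) ^ 2 + k4 * ((1 + r ^ 2 * a ^ 2)⁻¹) ^ 3)) with hFdef
  have hA0 : ∀ x : ℝ, (0 : ℝ) < 1 + x ^ 2 * a ^ 2 := fun x => by positivity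
  have hB0 : ∀ x : ℝ, (0 : ℝ) < 1 + x ^ 2 * b ^ 2 := fun x => by positivity
  have hzpow : ∀ y : ℝ, y ^ (-(3 + 1) : ℤ) = (y ^ 4)⁻¹ := fun y => by
    rw [show (-(3+1):ℤ) = -(4:ℕ) by norm_num, zpow_neg, zpow_natCast]
  -- derivative
  have hderiv : ∀ x : ℝ, HasDerivAt F
      (x ^ 7 * (1 + x ^ 2 * a ^ 2) ^ (-(3 + 1) : ℤ) * (1 + x ^ 2 * b ^ 2)⁻¹) x := by
    intro x
    have hA : HasDerivAt (fun y : ℝ => 1 + y ^ 2 * a ^ 2) (2 * x * a ^ 2) x := by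
      simpa using ((hasDerivAt_pow 2 x).mul_const (a ^ 2)).const_add (1 : ℝ)
    have hB : HasDerivAt (fun y : ℝ => 1 + y ^ 2 * b ^ 2) (2 * x * b ^ 2) x := by
      simpa using ((hasDerivAt_pow 2 x).mul_const (b ^ 2)).const_add (1 : ℝ)
    have h1 := hA.log (hA0 x).ne'
    have h2 := hB.log (hB0 x).ne'
    have h3 := hA.inv (hA0 x).ne'
    have h4 := h3.pow 2
    have h5 := h3.pow 3
    have H := ((h1.sub h2).const_mul k1).add
      ((h3.const_mul k2).add ((h4.const_mul k3).add (h5.const_mul k4)))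
    convert H using 1
    · rfl
    · rfl
    · rfl
    rw [hzpow, hk1, hk2, hk3, hk4, hcdef]
    have hAne := (hA0 x).ne'
    have hBne := (hB0 x).ne'
    have hc' : a ^ 2 - b ^ 2 ≠ 0 := hc
    simp only [Pi.inv_apply]
    norm_num
    field_simp
    ring
  -- nonnegativity
  have hpos : ∀ x ∈ Set.Ioi (0 : ℝ),
      0 ≤ x ^ 7 * (1 + x ^ 2 * a ^ 2) ^ (-(3 + 1) : ℤ) * (1 + x ^ 2 * b ^ 2)⁻¹ := by
    intro x hx
    have hx0 : 0 < x := hx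
    have := hA0 x
    have := hB0 x
    positivity
  -- limit at infinity
  have hlim : Filter.Tendsto F Filter.atTop (nhds (k1 * Real.log (a ^ 2 / b ^ 2))) := by
    have hinv : Filter.Tendsto (fun r : ℝ => (1 + r ^ 2 * a ^ 2)⁻¹) Filter.atTop (nhds 0) := by
      apply Filter.Tendsto.inv_tendsto_atTop
      apply Filter.tendsto_atTop_add_const_left
      exact (Filter.tendsto_pow_atTop (two_ne_zero)).atTop_mul_const (by positivity)
    have hratio : Filter.Tendsto (fun r : ℝ => (1 + r ^ 2 * a ^ 2) / (1 + r ^ 2 * b ^ 2))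
        Filter.atTop (nhds (a ^ 2 / b ^ 2)) := by
      have h0 : Filter.Tendsto (fun r : ℝ => ((r⁻¹) ^ 2 + a ^ 2) / ((r⁻¹) ^ 2 + b ^ 2))
          Filter.atTop (nhds ((0 ^ 2 + a ^ 2) / (0 ^ 2 + b ^ 2))) := by
        apply Filter.Tendsto.div
          ((tendsto_inv_atTop_zero.pow 2).add_const _)
          ((tendsto_inv_atTop_zero.pow 2).add_const _)
        positivity
      have h0' : ((0:ℝ) ^ 2 + a ^ 2) / ((0:ℝ) ^ 2 + b ^ 2) = a ^ 2 / b ^ 2 := by norm_num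
      rw [h0'] at h0
      apply h0.congr'
      filter_upwards [Filter.eventually_gt_atTop (0 : ℝ)] with r hr
      have hr0 : r ≠ 0 := hr.ne'
      have := (hB0 r).ne'
      field_simp
    have hlog : Filter.Tendsto
        (fun r : ℝ => Real.log (1 + r ^ 2 * a ^ 2) - Real.log (1 + r ^ 2 * b ^ 2))
        Filter.atTop (nhds (Real.log (a ^ 2 / b ^ 2))) := by
      have := (Real.continuousAt_log (by positivity : (a ^ 2 / b ^ 2) ≠ 0)).tendsto.comp hratio
      apply this.congr
      intro r
      simp only [Function.comp]
      rw [Real.log_div (hA0 r).ne' (hB0 r).ne']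
    have H := (hlog.const_mul k1).add
      ((hinv.const_mul k2).add (((hinv.pow 2).const_mul k3).add ((hinv.pow 3).const_mul k4)))
    have hv : k1 * Real.log (a ^ 2 / b ^ 2) +
        (k2 * 0 + (k3 * 0 ^ 2 + k4 * 0 ^ 3)) = k1 * Real.log (a ^ 2 / b ^ 2) := by ring
    rw [hFdef, ← hv]
    exact H
  have hcont : ∀ x ∈ Set.Ici (0:ℝ), HasDerivAt F
      (x ^ 7 * (1 + x ^ 2 * a ^ 2) ^ (-(3 + 1) : ℤ) * (1 + x ^ 2 * b ^ 2)⁻¹) x :=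
    fun x _ => hderiv x
  rw [integral_Ioi_of_hasDerivAt_of_nonneg' hcont hpos hlim]
  -- final algebra
  have hF0 : F 0 = k2 + (k3 + k4) := by
    simp [hFdef]
  rw [hF0, modLog, show (Finset.Icc 1 3 : Finset ℕ) = {1, 2, 3} from rfl]
  rw [show (-((3:ℕ) + 1 : ℤ)) = -(4:ℕ) by norm_num, zpow_neg, zpow_natCast]
  rw [Real.log_div (by positivity) (by positivity), Real.log_div (by positivity) (by positivity)]
  rw [Finset.sum_insert (by decide), Finset.sum_insert (by decide), Finset.sum_singleton]
  norm_num
  have hba : b ^ 2 - a ^ 2 ≠ 0 := fun h => hc (by linarith)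
  rw [show b ^ 2 / a ^ 2 - 1 = (b ^ 2 - a ^ 2) / a ^ 2 from by field_simp]
  rw [hk1, hk2, hk3, hk4, hcdef]
  have hc' : a ^ 2 - b ^ 2 ≠ 0 := hc
  field_simp
  ring
end

section
/- For every integer m ≥ 1 and all real numbers a, b > 0 with a ≠ b, one has 2 a^{2m} ∫₀^∞ r^{2m+1} (1 + r²a²)^{−(m+1)} (1 + r²b²)^{−1} dr = a^{−2} · ℒ_m(b²/a²). -/
open MeasureTheory

open intervalIntegral Real

lemma Jpos {c : ℝ} (hc1 : -1 < c) : ∀ w ∈ Set.Icc (0:ℝ) 1, 0 < 1 + c*w := by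
  intro w hw
  rcases le_or_gt 0 c with h | h
  · nlinarith [hw.1, hw.2]
  · nlinarith [hw.1, hw.2]

lemma Jval (c : ℝ) (hc1 : -1 < c) (hc0 : c ≠ 0) (m : ℕ) :
    ∫ w in (0:ℝ)..1, w^m * (1+c*w)⁻¹
      = (-1)^m * (c^(m+1))⁻¹ *
        (Real.log (1+c) - ∑ i ∈ Finset.Icc 1 m, (-1:ℝ)^(i+1) * c^i / (i:ℝ)) := by
  induction m with
  | zero =>
      simp only [pow_zero, one_mul]
      rw [show Finset.Icc 1 0 = ∅ from rfl]
      have h0 : ∫ w in (0:ℝ)..1, (1+c*w)⁻¹ = ∫ w in (0:ℝ)..1, (fun x => x⁻¹) (c * w + 1) := by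
        congr 1; ext w; ring_nf
      rw [h0, intervalIntegral.integral_comp_mul_add _ hc0 1]
      have hne : (0:ℝ) ∉ Set.uIcc (c*0+1) (c*1+1) := by
        intro h
        rcases Set.mem_uIcc.1 h with ⟨h1, _⟩ | ⟨_, h2⟩ <;> linarith
      rw [integral_inv hne]
      simp only [mul_zero, zero_add, mul_one, smul_eq_mul, div_one, pow_one]
      rw [add_comm 1 c]
      ring
  | succ m ih =>
      have huIcc : Set.uIcc (0:ℝ) 1 = Set.Icc 0 1 := Set.uIcc_of_le zero_le_one
      have key : Set.EqOn (fun w : ℝ => w^(m+1) * (1+c*w)⁻¹)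
          (fun w : ℝ => c⁻¹ * (w^m - w^m * (1+c*w)⁻¹)) (Set.uIcc 0 1) := by
        intro w hw
        rw [huIcc] at hw
        have h := (Jpos hc1 w hw).ne'
        field_simp
        ring
      rw [intervalIntegral.integral_congr key]
      have hcont : ContinuousOn (fun w : ℝ => w^m * (1+c*w)⁻¹) (Set.uIcc 0 1) := by
        apply ContinuousOn.mul (continuousOn_pow m)
        apply ContinuousOn.inv₀ (by fun_prop)
        intro w hw
        rw [huIcc] at hw
        exact (Jpos hc1 w hw).ne'
      have hint1 : IntervalIntegrable (fun w : ℝ => w^m) volume 0 1 :=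
        (continuous_pow m).intervalIntegrable 0 1
      have hint2 : IntervalIntegrable (fun w : ℝ => w^m * (1+c*w)⁻¹) volume 0 1 :=
        hcont.intervalIntegrable
      rw [intervalIntegral.integral_const_mul, intervalIntegral.integral_sub hint1 hint2,
        integral_pow, ih]
      have hm1 : ((m:ℝ)+1) ≠ 0 := by positivity
      rw [Finset.sum_Icc_succ_top (Nat.le_add_left 1 m)]
      push_cast
      rcases Nat.even_or_odd m with he | ho
      · rw [he.neg_one_pow, (he.add_one).neg_one_pow, ((he.add_one).add_one).neg_one_pow]
        rw [pow_succ, pow_succ]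
        field_simp
        ring
      · rw [ho.neg_one_pow, (ho.add_one).neg_one_pow, ((ho.add_one).add_one).neg_one_pow]
        rw [pow_succ, pow_succ]
        field_simp
        ring

section Sub
variable {a : ℝ} (ha : 0 < a)

lemma phi_image (ha : 0 < a) :
    (fun r : ℝ => 1 - (1 + r^2*a^2)⁻¹) '' (Set.Ioi 0) = Set.Ioo 0 1 := by
  ext w
  constructor
  · rintro ⟨r, hr, rfl⟩
    have hr0 : (0:ℝ) < r := hr
    have h1 : (1:ℝ) < 1 + r^2*a^2 := by nlinarith [mul_pos (pow_pos hr0 2) (pow_pos ha 2)]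
    have h2 : (0:ℝ) < 1 + r^2*a^2 := by linarith
    constructor
    · simp only [sub_pos]
      exact inv_lt_one_of_one_lt₀ h1
    · have : 0 < (1 + r^2*a^2)⁻¹ := inv_pos.2 h2
      linarith
  · rintro ⟨hw0, hw1⟩
    refine ⟨Real.sqrt (w/(1-w))/a, ?_, ?_⟩
    · have : 0 < w/(1-w) := div_pos hw0 (by linarith)
      exact div_pos (Real.sqrt_pos.2 this) ha
    · have hnn : 0 ≤ w/(1-w) := le_of_lt (div_pos hw0 (by linarith))
      have hsq : (Real.sqrt (w/(1-w))/a)^2 = w/((1-w)*a^2) := by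
        rw [div_pow, Real.sq_sqrt hnn]
        rw [div_div]
      show 1 - (1 + (Real.sqrt (w/(1-w))/a)^2*a^2)⁻¹ = w
      rw [hsq]
      have h1w : (1:ℝ) - w ≠ 0 := by linarith
      have : 1 + w/((1-w)*a^2)*a^2 = (1-w)⁻¹ := by
        field_simp
        ring
      rw [this, inv_inv]
      ring

lemma phi_inj (ha : 0 < a) :
    Set.InjOn (fun r : ℝ => 1 - (1 + r^2*a^2)⁻¹) (Set.Ioi 0) := by
  intro r hr s hs h
  simp only at h
  have h2 : (1 + r^2*a^2)⁻¹ = (1 + s^2*a^2)⁻¹ := by linarith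
  have h3 : 1 + r^2*a^2 = 1 + s^2*a^2 := inv_inj.mp h2
  have hrs : r^2 = s^2 := by
    have ha2 : (0:ℝ) < a^2 := by positivity
    nlinarith
  have hr0 : (0:ℝ) < r := hr
  have hs0 : (0:ℝ) < s := hs
  nlinarith

lemma phi_deriv (ha : 0 < a) (r : ℝ) :
    HasDerivAt (fun r : ℝ => 1 - (1 + r^2*a^2)⁻¹)
      ((2*r*a^2) * ((1+r^2*a^2)^2)⁻¹) r := by
  have hne : (1 + r^2*a^2) ≠ 0 := by positivity
  have h1 : HasDerivAt (fun r : ℝ => 1 + r^2*a^2) (2*r*a^2) r := by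
    simpa using ((hasDerivAt_pow 2 r).mul_const (a^2)).const_add 1
  have h2 := (h1.inv hne).const_sub 1
  exact h2.congr_deriv (by ring)

end Sub

/-- General spectral form of the Connes–Tretkoff rearrangement identities `𝒟_m = ℒ_m(Δ)`. -/
theorem integral_modLog (m : ℕ) (hm : 1 ≤ m) (a b : ℝ) (ha : 0 < a) (hb : 0 < b)
    (hab : a ≠ b) :
    2 * a ^ (2 * m) * ∫ r in Set.Ioi (0 : ℝ),
      r ^ (2 * m + 1) * (1 + r ^ 2 * a ^ 2) ^ (-(m + 1 : ℤ)) * (1 + r ^ 2 * b ^ 2)⁻¹ =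
    (a ^ 2)⁻¹ * modLog m (b ^ 2 / a ^ 2) := by
  have ha2 : (0:ℝ) < a^2 := by positivity
  set c : ℝ := b^2/a^2 - 1 with hcdef
  have hc1 : -1 < c := by
    have : 0 < b^2/a^2 := by positivity
    simp only [hcdef]; linarith
  have hc0 : c ≠ 0 := by
    simp only [hcdef]
    intro h
    have h1 : b^2/a^2 = 1 := by linarith
    field_simp at h1
    exact hab ((pow_left_inj₀ ha.le hb.le two_ne_zero).1 h1.symm)
  have hz : ∀ x : ℝ, x ^ (-(m+1:ℤ)) = (x^(m+1))⁻¹ := fun x => by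
    rw [show (-(m+1:ℤ)) = -((m+1:ℕ):ℤ) by push_cast; ring, zpow_neg, zpow_natCast]
  -- change of variables
  have himage := MeasureTheory.integral_image_eq_integral_abs_deriv_smul
    measurableSet_Ioi (fun r (_ : r ∈ Set.Ioi (0:ℝ)) => (phi_deriv ha r).hasDerivWithinAt)
    (phi_inj ha) (fun w => w^m * (1+c*w)⁻¹)
  rw [phi_image ha] at himage
  have hpt : Set.EqOn
      (fun r : ℝ => |2*r*a^2 * ((1+r^2*a^2)^2)⁻¹| •
        ((1-(1+r^2*a^2)⁻¹)^m * (1+c*(1-(1+r^2*a^2)⁻¹))⁻¹))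
      (fun r : ℝ => 2*a^(2*m+2) *
        (r ^ (2*m+1) * (1 + r^2*a^2) ^ (-(m + 1 : ℤ)) * (1 + r^2*b^2)⁻¹))
      (Set.Ioi 0) := by
    intro r hr
    have hr0 : (0:ℝ) < r := hr
    have hP : (0:ℝ) < 1 + r^2*a^2 := by positivity
    have hQ : (0:ℝ) < 1 + r^2*b^2 := by positivity
    have habs : |2*r*a^2 * ((1+r^2*a^2)^2)⁻¹| = 2*r*a^2 * ((1+r^2*a^2)^2)⁻¹ := by
      apply abs_of_pos; positivity
    have hphi : 1 - (1+r^2*a^2)⁻¹ = r^2*a^2 * (1+r^2*a^2)⁻¹ := by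
      field_simp
      ring
    have hcc : 1 + c*(r^2*a^2 * (1+r^2*a^2)⁻¹) = (1+r^2*b^2) * (1+r^2*a^2)⁻¹ := by
      simp only [hcdef]
      field_simp
      ring
    simp only [smul_eq_mul, habs, hphi, hcc, hz]
    rw [mul_inv, inv_inv, mul_pow, mul_pow, inv_pow, ← pow_mul, ← pow_mul]
    field_simp
    ring
  rw [MeasureTheory.setIntegral_congr_fun measurableSet_Ioi hpt,
    MeasureTheory.integral_const_mul] at himage
  have hJ : ∫ w in Set.Ioo (0:ℝ) 1, w^m*(1+c*w)⁻¹
      = (-1)^m * (c^(m+1))⁻¹ *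
        (Real.log (1+c) - ∑ i ∈ Finset.Icc 1 m, (-1:ℝ)^(i+1) * c^i / (i:ℝ)) := by
    rw [← MeasureTheory.integral_Ioc_eq_integral_Ioo,
      ← intervalIntegral.integral_of_le zero_le_one]
    exact Jval c hc1 hc0 m
  rw [hJ] at himage
  unfold modLog
  rw [hz]
  have hlog : b^2/a^2 = 1 + c := by simp only [hcdef]; ring
  rw [hlog, show (1:ℝ)+c-1 = c by ring]
  have hpow : a^(2*m+2) = a^(2*m) * a^2 := by rw [pow_add]
  rw [hpow] at himage
  set I := ∫ r in Set.Ioi (0:ℝ),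
      r ^ (2*m+1) * (1 + r^2*a^2) ^ (-(m + 1 : ℤ)) * (1 + r^2*b^2)⁻¹ with hI
  have : (a^2)⁻¹ * (2 * (a^(2*m) * a^2) * I) = 2 * a^(2*m) * I := by
    field_simp
  rw [← himage] at this
  rw [← this]
end
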